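/- Suppose (P*, λ*, μ*) is a KKT triple for the ED problem and b* ∈ ℝ^n satisfies λ* ≤ b*_i ≤ C_i'(P*_i) for all i. Then P* is an optimizer of the ISO problem for bids b*, i.e., P* minimizes (b*)ᵀP over the set {P ∈ ℝ^n : 1ᵀP = 1ᵀP_d, P ≥ 0}. -/
import Mathlib


open Finset

noncomputable section

/-- Feasible production profiles for the dispatch problems:
power balance `1ᵀP = 1ᵀP_d` and componentwise nonnegativity. -/
def Feasible {n : ℕ} (Pd P : Fin n → ℝ) : Prop :=
  (∑ i, P i = ∑ i, Pd i) ∧ ∀ i, 0 ≤ P i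

/-- `P` is an optimizer of the ISO problem for bids `b`:
it minimizes `bᵀP` over the feasible set. -/
def IsISOOpt {n : ℕ} (Pd b P : Fin n → ℝ) : Prop :=
  Feasible Pd P ∧ ∀ Q, Feasible Pd Q → ∑ i, b i * P i ≤ ∑ i, b i * Q i

/-- `P` is a minimizer of the economic dispatch (ED) problem. -/
def IsEDOpt {n : ℕ} (C : Fin n → ℝ → ℝ) (Pd P : Fin n → ℝ) : Prop :=
  Feasible Pd P ∧ ∀ Q, Feasible Pd Q → ∑ i, C i (P i) ≤ ∑ i, C i (Q i)

/-- `(P, lam, mu)` is a KKT triple for the ED problem, with `C' i` the marginal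
cost of generator `i`. -/
def IsKKT {n : ℕ} (C' : Fin n → ℝ → ℝ) (Pd P : Fin n → ℝ) (lam : ℝ)
    (mu : Fin n → ℝ) : Prop :=
  (∀ i, C' i (P i) = lam + mu i) ∧ (∑ i, P i = ∑ i, Pd i) ∧
    (∀ i, 0 ≤ P i) ∧ (∀ i, 0 ≤ mu i) ∧ (∑ i, P i * mu i = 0)

/-- Payoff of a generator with cost `Ci` bidding `bi` and producing `Pi`. -/
def Payoff (Ci : ℝ → ℝ) (bi Pi : ℝ) : ℝ := Pi * bi - Ci Pi

/-- `bstar` is a Nash equilibrium of the inelastic electricity market game. -/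
def IsNash {n : ℕ} (C : Fin n → ℝ → ℝ) (Pd bstar : Fin n → ℝ) : Prop :=
  (∀ i, 0 ≤ bstar i) ∧
  ∃ P0, IsISOOpt Pd bstar P0 ∧
    ∀ i (bi : ℝ), 0 ≤ bi → bi ≠ bstar i →
      ∀ P, IsISOOpt Pd (Function.update bstar i bi) P →
        Payoff (C i) bi (P i) ≤ Payoff (C i) (bstar i) (P0 i)

/-- `bstar` is an efficient bid: the optimizer of the ED problem is also an
optimizer of the ISO problem for bids `bstar`, and each `Pstar i` maximizes
the profit `P ↦ P * bstar i - C i P` over `P ≥ 0`. -/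
def IsEfficientBid {n : ℕ} (C : Fin n → ℝ → ℝ) (Pd bstar : Fin n → ℝ) : Prop :=
  (∀ i, 0 ≤ bstar i) ∧
  ∀ Pstar, IsEDOpt C Pd Pstar →
    IsISOOpt Pd bstar Pstar ∧
      ∀ i, ∀ P, 0 ≤ P → Payoff (C i) (bstar i) P ≤ Payoff (C i) (bstar i) (Pstar i)

/-- Standing assumptions on a generator cost function: continuously
differentiable with derivative `Cf'`, strongly convex on `[0, ∞)`, and
nonnegative marginal cost at zero. -/
def CostAssumptions (Cf Cf' : ℝ → ℝ) : Prop :=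
  (∀ x, HasDerivAt Cf (Cf' x) x) ∧ Continuous Cf' ∧
    (∃ m : ℝ, 0 < m ∧
      ∀ x y, 0 ≤ x → 0 ≤ y → (Cf' x - Cf' y) * (x - y) ≥ m * (x - y) ^ 2) ∧
    0 ≤ Cf' 0

/-- `P` is the unique maximizer of the profit `Q ↦ β * Q - Cf Q` over `Q ≥ 0`. -/
def IsUniqueArgmaxProfit (Cf : ℝ → ℝ) (β P : ℝ) : Prop :=
  0 ≤ P ∧ (∀ Q, 0 ≤ Q → β * Q - Cf Q ≤ β * P - Cf P) ∧
    ∀ Q, 0 ≤ Q → (∀ R, 0 ≤ R → β * R - Cf R ≤ β * Q - Cf Q) → Q = P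

/-- If `(Pstar, lam, mu)` is a KKT triple for the ED problem and
`lam ≤ bstar i ≤ C' i (Pstar i)` for all `i`, then `Pstar` is an optimizer of
the ISO problem for bids `bstar`. -/
theorem kkt_bid_iso_optimal {n : ℕ} (hn : 1 ≤ n)
    (C C' : Fin n → ℝ → ℝ) (hC : ∀ i, CostAssumptions (C i) (C' i))
    (Pd : Fin n → ℝ) (hPd : ∀ i, 0 ≤ Pd i) (hPdpos : 0 < ∑ i, Pd i)
    (Pstar : Fin n → ℝ) (lam : ℝ) (mu : Fin n → ℝ)
    (hKKT : IsKKT C' Pd Pstar lam mu)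
    (bstar : Fin n → ℝ)
    (hb : ∀ i, lam ≤ bstar i ∧ bstar i ≤ C' i (Pstar i)) :
    IsISOOpt Pd bstar Pstar := by
  obtain ⟨hgrad, hbal, hpos, hmupos, hcomp⟩ := hKKT
  -- each term of complementarity is zero
  have hterm : ∀ i, Pstar i * mu i = 0 := by
    intro i
    have h0 : ∀ j ∈ Finset.univ, 0 ≤ Pstar j * mu j := fun j _ =>
      mul_nonneg (hpos j) (hmupos j)
    exact le_antisymm (hcomp ▸ Finset.single_le_sum h0 (Finset.mem_univ i))
      (mul_nonneg (hpos i) (hmupos i))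
  have hbP : ∀ i, bstar i * Pstar i = lam * Pstar i := by
    intro i
    rcases eq_or_lt_of_le (hpos i) with h | h
    · rw [← h]; ring
    · have hmu : mu i = 0 := by
        have := hterm i
        rcases mul_eq_zero.1 this with h1 | h1
        · exact absurd h1.symm (ne_of_lt h)
        · exact h1
      have : bstar i = lam := le_antisymm (by have := (hb i).2; rw [hgrad i, hmu] at this; simpa using this) (hb i).1
      rw [this]
  refine ⟨⟨hbal, hpos⟩, fun Q hQ => ?_⟩
  calc ∑ i, bstar i * Pstar i = ∑ i, lam * Pstar i := by
        exact Finset.sum_congr rfl fun i _ => hbP i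
    _ = lam * ∑ i, Pstar i := by rw [Finset.mul_sum]
    _ = lam * ∑ i, Q i := by rw [hbal, hQ.1]
    _ = ∑ i, lam * Q i := by rw [Finset.mul_sum]
    _ ≤ ∑ i, bstar i * Q i := Finset.sum_le_sum fun i _ =>
        mul_le_mul_of_nonneg_right (hb i).1 (hQ.2 i)
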